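/- Let X = [-1,1] ⊆ ℝ, let G(x,y,z) = |x−y| + |y−z| + |x−z|, and let T : [-1,1] → [-1,1] be defined by T(x) = −(1/2)·x·e^{−1/|x|} for x ∈ (0,1], T(0) = 0, and T(x) = −(1/3)·x·e^{−1/|x|} for x ∈ [−1,0). Then for all x ∈ [0,1] and y ∈ [−1,0], G(Tx,Ty,Ty) ≤ (1/2)·G(x,Tx,Tx) + (1/3)·G(y,Ty,Ty). -/
import Mathlib


/-- The G-metric `G(x,y,z) = |x-y| + |y-z| + |x-z|` on `[-1,1] ⊆ ℝ`. -/
noncomputable def Gex (x y z : ℝ) : ℝ := |x - y| + |y - z| + |x - z|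

/-- The map `T` of the example: `T x = -(1/2) x e^{-1/|x|}` for `x ∈ (0,1]`,
`T 0 = 0`, and `T x = -(1/3) x e^{-1/|x|}` for `x ∈ [-1,0)`. -/
noncomputable def Tex (x : ℝ) : ℝ :=
  if 0 < x then -(1 / 2) * x * Real.exp (-1 / |x|)
  else if x < 0 then -(1 / 3) * x * Real.exp (-1 / |x|)
  else 0

lemma Tex_nonneg_bounds {x : ℝ} (hx : 0 ≤ x) : -x / 2 ≤ Tex x ∧ Tex x ≤ 0 := by
  rcases eq_or_lt_of_le hx with h | h
  · simp [Tex, ← h]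
  · have habs : |x| = x := abs_of_pos h
    have he1 : Real.exp (-1 / |x|) ≤ 1 := by
      rw [habs]
      have : -1 / x ≤ 0 := by apply div_nonpos_of_nonpos_of_nonneg <;> linarith
      calc Real.exp (-1 / x) ≤ Real.exp 0 := Real.exp_le_exp.mpr this
        _ = 1 := Real.exp_zero
    have he0 : 0 < Real.exp (-1 / |x|) := Real.exp_pos _
    rw [Tex, if_pos h]
    constructor
    · nlinarith
    · nlinarith

lemma Tex_nonpos_bounds {y : ℝ} (hy : y ≤ 0) : 0 ≤ Tex y ∧ Tex y ≤ -y / 3 := by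
  rcases eq_or_lt_of_le hy with h | h
  · simp [Tex, h]
  · have habs : |y| = -y := abs_of_neg h
    have he1 : Real.exp (-1 / |y|) ≤ 1 := by
      rw [habs]
      have : -1 / (-y) ≤ 0 := by
        apply div_nonpos_of_nonpos_of_nonneg <;> linarith
      calc Real.exp (-1 / (-y)) ≤ Real.exp 0 := Real.exp_le_exp.mpr this
        _ = 1 := Real.exp_zero
    have he0 : 0 < Real.exp (-1 / |y|) := Real.exp_pos _
    rw [Tex, if_neg (by linarith), if_pos h]
    constructor
    · nlinarith
    · nlinarith

theorem stmt_9 :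
    ∀ x ∈ Set.Icc (0 : ℝ) 1, ∀ y ∈ Set.Icc (-1 : ℝ) 0,
      Gex (Tex x) (Tex y) (Tex y) ≤
        (1 / 2) * Gex x (Tex x) (Tex x) + (1 / 3) * Gex y (Tex y) (Tex y) := by
  intro x hx y hy
  obtain ⟨hTx1, hTx2⟩ := Tex_nonneg_bounds hx.1
  obtain ⟨hTy1, hTy2⟩ := Tex_nonpos_bounds hy.2
  have h1 : Tex x - Tex y ≤ 0 := by linarith
  have h2 : 0 ≤ x - Tex x := by linarith [hx.1]
  have h3 : y - Tex y ≤ 0 := by linarith [hy.2]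
  simp only [Gex, sub_self, abs_zero]
  rw [abs_of_nonpos h1, abs_of_nonneg h2, abs_of_nonpos h3]
  linarith [hx.1, hy.2]
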